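/- Let 𝔽 be ℝ or ℂ, X a Banach space over 𝔽 with dim X ≥ 2, and 𝒜 a standard operator algebra in B(X). Let Φ : 𝒜 → 𝒜 be a surjective strong 3-commutativity preserving map. Then for any nontrivial idempotent P ∈ 𝒜 of rank at most 2, there exist scalars λ_P, μ_P ∈ 𝔽 such that Φ(P) = λ_P·P + μ_P·I. -/

import Mathlib

set_option synthInstance.maxHeartbeats 400000
set_option maxHeartbeats 1000000

/-- The commutator `[A,B] = AB - BA` in a ring. -/
def bracket1 {R : Type*} [Ring R] (A B : R) : R := A * B - B * A

/-- The 3-commutator `[A,B]₃ = [[[A,B],B],B]` in a ring. -/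
def bracket3 {R : Type*} [Ring R] (A B : R) : R := bracket1 (bracket1 (bracket1 A B) B) B

/-- A standard operator algebra on a normed space `X` over `𝕜` is a subalgebra of
`B(X)` (automatically containing the identity) containing all finite-rank operators. -/
def IsStandardOperatorAlgebra (𝕜 : Type*) [RCLike 𝕜] (X : Type*)
    [NormedAddCommGroup X] [NormedSpace 𝕜 X]
    (𝒜 : Subalgebra 𝕜 (X →L[𝕜] X)) : Prop :=
  ∀ T : X →L[𝕜] X, FiniteDimensional 𝕜 (LinearMap.range (T : X →ₗ[𝕜] X)) → T ∈ 𝒜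


section RingLemmas
variable {R : Type*} [Ring R]

lemma b3_idem (A B : R) (hB : B * B = B) : bracket3 A B = A * B - B * A := by
  have h1 : ∀ x : R, B * (B * x) = B * x := fun x => by rw [← mul_assoc, hB]
  simp only [bracket3, bracket1, sub_mul, mul_sub, mul_assoc, h1, hB, neg_mul, mul_neg,
    neg_neg, mul_zero, zero_mul, neg_zero, sub_zero, zero_sub]
  abel

lemma b3_sqzero (A B : R) (hB : B * B = 0) : bracket3 A B = 0 := by
  have h1 : ∀ x : R, B * (B * x) = 0 := fun x => by rw [← mul_assoc, hB, zero_mul]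
  simp only [bracket3, bracket1, sub_mul, mul_sub, mul_assoc, h1, hB, neg_mul, mul_neg,
    neg_neg, mul_zero, zero_mul, neg_zero, sub_zero, zero_sub]

lemma corner1 (P A : R) (hP : P * P = P) : P * (A * P - P * A) * P = 0 := by
  have h1 : ∀ x : R, P * (P * x) = P * x := fun x => by rw [← mul_assoc, hP]
  simp only [mul_sub, sub_mul, mul_assoc, h1, hP]
  abel

lemma corner2 (P A : R) (hP : P * P = P) : (1 - P) * (A * P - P * A) * (1 - P) = 0 := by
  have h1 : ∀ x : R, P * (P * x) = P * x := fun x => by rw [← mul_assoc, hP]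
  simp only [mul_sub, sub_mul, mul_assoc, mul_one, one_mul, h1, hP]
  abel

end RingLemmas

section Shift
variable {𝕜 X : Type*} [RCLike 𝕜] [NormedAddCommGroup X] [NormedSpace 𝕜 X]
local notation "BX" => X →L[𝕜] X

lemma b1_shift (A B : BX) (c : 𝕜) : bracket1 A (B + c • 1) = bracket1 A B := by
  simp only [bracket1, mul_add, add_mul, mul_smul_comm, smul_mul_assoc, mul_one, one_mul]
  abel

lemma b3_shift (A B : BX) (c : 𝕜) : bracket3 A (B + c • 1) = bracket3 A B := by
  simp only [bracket3, b1_shift]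

lemma b3_unshift (A B : BX) (c : 𝕜) : bracket3 A B = bracket3 A (B - c • 1) := by
  have : B = (B - c • 1) + c • 1 := by abel
  rw [this, b3_shift]
  rw [show B - c • 1 + c • 1 - c • 1 = B - c • 1 by abel]

end Shift

section RankOne
variable {𝕜 X : Type*} [RCLike 𝕜] [NormedAddCommGroup X] [NormedSpace 𝕜 X]
local notation "BX" => X →L[𝕜] X

noncomputable def rk1 (x : X) (f : X →L[𝕜] 𝕜) : X →L[𝕜] X := f.smulRight x

@[simp] lemma rk1_apply (x : X) (f : X →L[𝕜] 𝕜) (y : X) : rk1 x f y = f y • x := rfl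

lemma mul_rk1 (T : BX) (x : X) (f : X →L[𝕜] 𝕜) : T * rk1 x f = rk1 (T x) f := by
  ext y; simp [ContinuousLinearMap.mul_apply]

lemma rk1_mul (x : X) (f : X →L[𝕜] 𝕜) (T : BX) : rk1 x f * T = rk1 x (f.comp T) := by
  ext y; simp [ContinuousLinearMap.mul_apply]

@[simp] lemma rk1_zero_left (f : X →L[𝕜] 𝕜) : rk1 (0 : X) f = 0 := by ext y; simp
@[simp] lemma rk1_zero_right (x : X) : rk1 x (0 : X →L[𝕜] 𝕜) = 0 := by ext y; simp

lemma rk1_smul_right (x : X) (c : 𝕜) (f : X →L[𝕜] 𝕜) : rk1 x (c • f) = c • rk1 x f := by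
  ext y; simp [smul_smul, mul_comm]

lemma rk1_mem {𝒜 : Subalgebra 𝕜 (X →L[𝕜] X)}
    (h𝒜 : ∀ T : X →L[𝕜] X, FiniteDimensional 𝕜 (LinearMap.range (T : X →ₗ[𝕜] X)) → T ∈ 𝒜)
    (x : X) (f : X →L[𝕜] 𝕜) : rk1 x f ∈ 𝒜 := by
  apply h𝒜
  have hle : LinearMap.range (rk1 x f : X →ₗ[𝕜] X) ≤ Submodule.span 𝕜 {x} := by
    rintro w ⟨y, rfl⟩
    exact Submodule.smul_mem _ _ (Submodule.mem_span_singleton_self x)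
  have : FiniteDimensional 𝕜 (Submodule.span 𝕜 ({x} : Set X)) := by
    apply FiniteDimensional.span_of_finite
    exact Set.finite_singleton x
  exact Submodule.finiteDimensional_of_le hle

lemma exists_dual_one (v : X) (hv : v ≠ 0) : ∃ g : X →L[𝕜] 𝕜, g v = 1 := by
  obtain ⟨g, _, hgv⟩ := exists_dual_vector 𝕜 v (norm_ne_zero_iff.mpr hv)
  have hn : (‖v‖ : 𝕜) ≠ 0 := by
    simpa using norm_ne_zero_iff.mpr hv
  exact ⟨(‖v‖ : 𝕜)⁻¹ • g, by simp [hgv, inv_mul_cancel₀ hn]⟩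

lemma vec_zero (v : X) (h : ∀ g : X →L[𝕜] 𝕜, g v = 0) : v = 0 := by
  by_contra hv
  obtain ⟨g, hg⟩ := exists_dual_one (𝕜 := 𝕜) v hv
  rw [h g] at hg
  exact zero_ne_one hg

lemma op_zero (T : BX) (h : ∀ (g : X →L[𝕜] 𝕜) (y : X), g (T y) = 0) : T = 0 := by
  ext y
  exact vec_zero _ (fun g => h g y)

lemma scalar_of_comm [Nontrivial X] (T : BX)
    (h : ∀ (x : X) (f : X →L[𝕜] 𝕜), rk1 x f * T = T * rk1 x f) : ∃ c : 𝕜, T = c • 1 := by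
  obtain ⟨y₀, hy₀⟩ := exists_ne (0 : X)
  obtain ⟨g, hg⟩ := exists_dual_one (𝕜 := 𝕜) y₀ hy₀
  refine ⟨g (T y₀), ?_⟩
  ext x
  have h1 := h x g
  rw [rk1_mul, mul_rk1] at h1
  have h2 := DFunLike.congr_fun h1 y₀
  simp only [rk1_apply, ContinuousLinearMap.coe_comp', Function.comp_apply, hg, one_smul] at h2
  simp [← h2]

lemma idem_scalar_contra [Nontrivial X] (T : BX) (hT : T * T = T) (h0 : T ≠ 0) (h1 : T ≠ 1)
    (hc : ∀ (x : X) (f : X →L[𝕜] 𝕜), rk1 x f * T = T * rk1 x f) : False := by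
  obtain ⟨c, rfl⟩ := scalar_of_comm T hc
  obtain ⟨y₀, hy₀⟩ := exists_ne (0 : X)
  have hone : (1 : BX) ≠ 0 := by
    intro h
    exact hy₀ (by calc y₀ = (1 : BX) y₀ := rfl
      _ = (0 : BX) y₀ := by rw [h]
      _ = 0 := rfl)
  have hsm : (c * c) • (1 : BX) = c • 1 := by
    rw [← hT]; rw [smul_mul_assoc, mul_smul_comm, one_mul, smul_smul]
  have hcc : c * c = c := by
    have := sub_eq_zero.mpr hsm
    rw [← sub_smul] at this
    rcases smul_eq_zero.mp this with h | h
    · exact sub_eq_zero.mp h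
    · exact absurd h hone
  rcases mul_eq_zero.mp (by linear_combination hcc : c * (c - 1) = 0) with h | h
  · exact h0 (by rw [h, zero_smul])
  · exact h1 (by rw [sub_eq_zero.mp h, one_smul])

lemma rk1_ne_one (hdim : 2 ≤ Module.rank 𝕜 X) (v : X) (g : X →L[𝕜] 𝕜) : rk1 v g ≠ 1 := by
  intro h
  have hspan : (⊤ : Submodule 𝕜 X) = Submodule.span 𝕜 {v} := by
    apply le_antisymm _ le_top
    intro w _
    rw [Submodule.mem_span_singleton]
    refine ⟨g w, ?_⟩
    have := DFunLike.congr_fun h w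
    simpa [rk1_apply] using this
  have hle : Module.rank 𝕜 X ≤ 1 := by
    rw [← rank_top 𝕜 X, hspan]
    simpa using rank_span_le (R := 𝕜) ({v} : Set X)
  have : (2 : Cardinal) ≤ 1 := hdim.trans hle
  norm_num at this

end RankOne

section OnePrime
variable {𝕜 X : Type*} [RCLike 𝕜] [NormedAddCommGroup X] [NormedSpace 𝕜 X]
local notation "BX" => X →L[𝕜] X

lemma oneprime (P Q : BX)
    (H : ∀ (x : X) (f : X →L[𝕜] 𝕜), P * bracket3 (rk1 x f) Q * P = 0)
    (f : X →L[𝕜] 𝕜) (y : X) :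
    (f (Q (Q (Q (P y))))) • P - (3 * f (Q (Q (P y)))) • (P * Q)
      + (3 * f (Q (P y))) • (P * Q * Q) - (f (P y)) • (P * Q * Q * Q) = 0 := by
  ext x
  have h := DFunLike.congr_fun (H x f) y
  simp only [bracket3, bracket1, ContinuousLinearMap.mul_apply, ContinuousLinearMap.sub_apply,
    ContinuousLinearMap.zero_apply, rk1_apply, map_sub, map_smul] at h
  simp only [ContinuousLinearMap.sub_apply, ContinuousLinearMap.add_apply,
    ContinuousLinearMap.smul_apply, ContinuousLinearMap.mul_apply, ContinuousLinearMap.zero_apply]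
  linear_combination (norm := module) h

end OnePrime

section Extract
variable {𝕜 X : Type*} [RCLike 𝕜] [NormedAddCommGroup X] [NormedSpace 𝕜 X]
local notation "BX" => X →L[𝕜] X

lemma extract1 {P : BX} (hP0 : P ≠ 0) {a : 𝕜} (h : a • P = 0) : a = 0 := by
  rcases smul_eq_zero.mp h with h | h
  · exact h
  · exact absurd h hP0

lemma extract2 {P Q : BX} (hP0 : P ≠ 0) (h1 : ¬ ∃ δ : 𝕜, P * Q = δ • P)
    {a b : 𝕜} (h : a • P + b • (P * Q) = 0) : a = 0 ∧ b = 0 := by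
  by_cases hb : b = 0
  · subst hb
    rw [zero_smul, add_zero] at h
    exact ⟨extract1 hP0 h, rfl⟩
  · exfalso
    apply h1
    refine ⟨-(b⁻¹ * a), ?_⟩
    have : b • (P * Q) = (-a) • P := by
      linear_combination (norm := module) h
    calc P * Q = b⁻¹ • (b • (P * Q)) := by rw [smul_smul, inv_mul_cancel₀ hb, one_smul]
      _ = b⁻¹ • ((-a) • P) := by rw [this]
      _ = (-(b⁻¹ * a)) • P := by rw [smul_smul]; ring_nf
  
lemma extract3 {P Q : BX} (hP0 : P ≠ 0) (h1 : ¬ ∃ δ : 𝕜, P * Q = δ • P)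
    (h2 : ¬ ∃ β γ : 𝕜, P * Q * Q = β • P + γ • (P * Q))
    {a b c : 𝕜} (h : a • P + b • (P * Q) + c • (P * Q * Q) = 0) : a = 0 ∧ b = 0 ∧ c = 0 := by
  by_cases hc : c = 0
  · subst hc
    rw [zero_smul, add_zero] at h
    obtain ⟨ha, hb⟩ := extract2 hP0 h1 h
    exact ⟨ha, hb, rfl⟩
  · exfalso
    apply h2
    refine ⟨-(c⁻¹ * a), -(c⁻¹ * b), ?_⟩
    have : c • (P * Q * Q) = (-a) • P + (-b) • (P * Q) := by
      linear_combination (norm := module) h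
    calc P * Q * Q = c⁻¹ • (c • (P * Q * Q)) := by rw [smul_smul, inv_mul_cancel₀ hc, one_smul]
      _ = c⁻¹ • ((-a) • P + (-b) • (P * Q)) := by rw [this]
      _ = (-(c⁻¹ * a)) • P + (-(c⁻¹ * b)) • (P * Q) := by
          rw [smul_add, smul_smul, smul_smul]; ring_nf

lemma extract4 {P Q : BX} (hP0 : P ≠ 0) (h1 : ¬ ∃ δ : 𝕜, P * Q = δ • P)
    (h2 : ¬ ∃ β γ : 𝕜, P * Q * Q = β • P + γ • (P * Q))
    (h3 : ¬ ∃ α β γ : 𝕜, P * Q * Q * Q = α • P + β • (P * Q) + γ • (P * Q * Q))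
    {a b c d : 𝕜} (h : a • P + b • (P * Q) + c • (P * Q * Q) + d • (P * Q * Q * Q) = 0) :
    d = 0 := by
  by_cases hd : d = 0
  · exact hd
  · exfalso
    apply h3
    refine ⟨-(d⁻¹ * a), -(d⁻¹ * b), -(d⁻¹ * c), ?_⟩
    have : d • (P * Q * Q * Q) = (-a) • P + (-b) • (P * Q) + (-c) • (P * Q * Q) := by
      linear_combination (norm := module) h
    calc P * Q * Q * Q = d⁻¹ • (d • (P * Q * Q * Q)) := by
          rw [smul_smul, inv_mul_cancel₀ hd, one_smul]
      _ = d⁻¹ • ((-a) • P + (-b) • (P * Q) + (-c) • (P * Q * Q)) := by rw [this]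
      _ = (-(d⁻¹ * a)) • P + (-(d⁻¹ * b)) • (P * Q) + (-(d⁻¹ * c)) • (P * Q * Q) := by
          rw [smul_add, smul_add, smul_smul, smul_smul, smul_smul]; ring_nf

end Extract

section Side
variable {𝕜 X : Type*} [RCLike 𝕜] [NormedAddCommGroup X] [NormedSpace 𝕜 X]
local notation "BX" => X →L[𝕜] X

set_option linter.unusedVariables false in
lemma side (P Q : BX) (hP : P * P = P) (hP0 : P ≠ 0)
    (H : ∀ (x : X) (f : X →L[𝕜] 𝕜), P * bracket3 (rk1 x f) Q * P = 0) :
    ∃ l : 𝕜, ((Q - l • 1) * P = 0)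
      ∨ ((Q - l • 1) * ((Q - l • 1) * P) = 0 ∧ (P * (Q - l • 1)) * (Q - l • 1) = 0)
      ∨ ((P * (Q - l • 1) = 0) ∧ (Q - l • 1) * ((Q - l • 1) * ((Q - l • 1) * P)) = 0) := by
  by_cases h1 : ∃ δ : 𝕜, P * Q = δ • P
  · obtain ⟨δ, hPQ⟩ := h1
    have hPQ2 : P * Q * Q = (δ * δ) • P := by
      rw [hPQ, smul_mul_assoc, hPQ, smul_smul]
    have hPQ3 : P * Q * Q * Q = (δ * δ * δ) • P := by
      rw [hPQ2, smul_mul_assoc, hPQ, smul_smul]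
    have key : ∀ (f : X →L[𝕜] 𝕜) (y : X),
        f (Q (Q (Q (P y)))) - (3 * δ) * f (Q (Q (P y))) + (3 * (δ * δ)) * f (Q (P y))
          - (δ * δ * δ) * f (P y) = 0 := by
      intro f y
      have h := oneprime P Q H f y
      rw [hPQ3, hPQ2, hPQ] at h
      apply extract1 hP0
      calc _ = (f (Q (Q (Q (P y))))) • P - (3 * f (Q (Q (P y)))) • (δ • P)
            + (3 * f (Q (P y))) • ((δ * δ) • P) - (f (P y)) • ((δ * δ * δ) • P) := by module
        _ = 0 := h
    have hZ : Q * (Q * (Q * P)) - (3 * δ) • (Q * (Q * P)) + (3 * (δ * δ)) • (Q * P)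
        - (δ * δ * δ) • P = 0 := by
      apply op_zero
      intro g y
      have hk := key g y
      simp only [ContinuousLinearMap.sub_apply, ContinuousLinearMap.add_apply,
        ContinuousLinearMap.smul_apply, ContinuousLinearMap.mul_apply, map_sub, map_add, map_smul,
        smul_eq_mul]
      linear_combination hk
    refine ⟨δ, Or.inr (Or.inr ⟨?_, ?_⟩)⟩
    · rw [mul_sub, hPQ, mul_smul_comm, mul_one, sub_self]
    · calc (Q - δ • 1) * ((Q - δ • 1) * ((Q - δ • 1) * P))
          = Q * (Q * (Q * P)) - (3 * δ) • (Q * (Q * P)) + (3 * (δ * δ)) • (Q * P)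
            - (δ * δ * δ) • P := by
            simp only [sub_mul, mul_sub, smul_mul_assoc, mul_smul_comm, one_mul, smul_smul]
            module
        _ = 0 := hZ
  by_cases h2 : ∃ β γ : 𝕜, P * Q * Q = β • P + γ • (P * Q)
  · obtain ⟨β, γ, hβγ⟩ := h2
    have hPQ3 : P * Q * Q * Q = (γ * β) • P + (β + γ * γ) • (P * Q) := by
      calc P * Q * Q * Q = (β • P + γ • (P * Q)) * Q := by rw [hβγ]
        _ = β • (P * Q) + γ • (P * Q * Q) := by
          rw [add_mul, smul_mul_assoc, smul_mul_assoc]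
        _ = β • (P * Q) + γ • (β • P + γ • (P * Q)) := by rw [hβγ]
        _ = (γ * β) • P + (β + γ * γ) • (P * Q) := by module
    have key : ∀ (f : X →L[𝕜] 𝕜) (y : X),
        (f (Q (Q (Q (P y)))) + (3 * β) * f (Q (P y)) - (γ * β) * f (P y) = 0)
        ∧ (3 * f (Q (Q (P y))) - (3 * γ) * f (Q (P y)) + (β + γ * γ) * f (P y) = 0) := by
      intro f y
      have h := oneprime P Q H f y
      rw [hPQ3, hβγ] at h
      have h' : (f (Q (Q (Q (P y)))) + (3 * β) * f (Q (P y)) - (γ * β) * f (P y)) • P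
          + (-(3 * f (Q (Q (P y)))) + (3 * γ) * f (Q (P y)) - (β + γ * γ) * f (P y)) • (P * Q)
          = 0 := by
        calc _ = (f (Q (Q (Q (P y))))) • P - (3 * f (Q (Q (P y)))) • (P * Q)
              + (3 * f (Q (P y))) • (β • P + γ • (P * Q))
              - (f (P y)) • ((γ * β) • P + (β + γ * γ) • (P * Q)) := by module
          _ = 0 := h
      obtain ⟨ha, hb⟩ := extract2 hP0 h1 h'
      exact ⟨ha, by linear_combination -hb⟩
    have eqA : Q * (Q * (Q * P)) + (3 * β) • (Q * P) - (γ * β) • P = 0 := by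
      apply op_zero; intro g y
      simp only [ContinuousLinearMap.sub_apply, ContinuousLinearMap.add_apply,
        ContinuousLinearMap.smul_apply, ContinuousLinearMap.mul_apply, map_sub, map_add, map_smul,
        smul_eq_mul]
      linear_combination (key g y).1
    have eqB : (3:𝕜) • (Q * (Q * P)) - (3 * γ) • (Q * P) + (β + γ * γ) • P = 0 := by
      apply op_zero; intro g y
      simp only [ContinuousLinearMap.sub_apply, ContinuousLinearMap.add_apply,
        ContinuousLinearMap.smul_apply, ContinuousLinearMap.mul_apply, map_sub, map_add, map_smul,
        smul_eq_mul]
      linear_combination (key g y).2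
    have h3 : (3:𝕜) ≠ 0 := three_ne_zero
    have eqB' : Q * (Q * P) = γ • (Q * P) - ((β + γ * γ)/3) • P := by
      calc Q * (Q * P) = (3:𝕜)⁻¹ • ((3:𝕜) • (Q * (Q * P))) := by
            rw [smul_smul, inv_mul_cancel₀ h3, one_smul]
        _ = (3:𝕜)⁻¹ • ((3 * γ) • (Q * P) - (β + γ * γ) • P) := by
            rw [show (3:𝕜) • (Q * (Q * P)) = (3 * γ) • (Q * P) - (β + γ * γ) • P by
              linear_combination (norm := module) eqB]
        _ = γ • (Q * P) - ((β + γ * γ)/3) • P := by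
            match_scalars <;> field_simp <;> ring
    have eqA' : Q * (Q * (Q * P)) = (γ * γ - (β + γ * γ)/3) • (Q * P)
        - (γ * (β + γ * γ)/3) • P := by
      calc Q * (Q * (Q * P)) = Q * (γ • (Q * P) - ((β + γ * γ)/3) • P) := by rw [eqB']
        _ = γ • (Q * (Q * P)) - ((β + γ * γ)/3) • (Q * P) := by
            rw [mul_sub, mul_smul_comm, mul_smul_comm]
        _ = γ • (γ • (Q * P) - ((β + γ * γ)/3) • P) - ((β + γ * γ)/3) • (Q * P) := by rw [eqB']
        _ = (γ * γ - (β + γ * γ)/3) • (Q * P) - (γ * (β + γ * γ)/3) • P := by module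
    by_cases hs : 4 * β + γ * γ = 0
    · have hβ : β = -(γ * γ)/4 := by linear_combination hs / 4
      refine ⟨γ/2, Or.inr (Or.inl ⟨?_, ?_⟩)⟩
      · calc (Q - (γ/2) • 1) * ((Q - (γ/2) • 1) * P)
            = Q * (Q * P) - γ • (Q * P) + (γ * γ/4) • P := by
              simp only [sub_mul, mul_sub, smul_mul_assoc, mul_smul_comm, one_mul, smul_smul]
              module
          _ = (γ • (Q * P) - ((β + γ * γ)/3) • P) - γ • (Q * P) + (γ * γ/4) • P := by rw [eqB']
          _ = 0 := by rw [hβ]; match_scalars <;> field_simp <;> ring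
      · calc (P * (Q - (γ/2) • 1)) * (Q - (γ/2) • 1)
            = P * Q * Q - γ • (P * Q) + (γ * γ/4) • P := by
              simp only [sub_mul, mul_sub, smul_mul_assoc, mul_smul_comm, one_mul, mul_one,
                smul_smul]
              module
          _ = (β • P + γ • (P * Q)) - γ • (P * Q) + (γ * γ/4) • P := by rw [hβγ]
          _ = 0 := by rw [hβ]; match_scalars <;> field_simp <;> ring
    · have comb : ((2 * (4 * β + γ * γ))/3) • (Q * P) = ((γ * (4 * β + γ * γ))/3) • P := by
        linear_combination (norm := module) eqA - eqA'
      have hs2 : ((2 * (4 * β + γ * γ))/3 : 𝕜) ≠ 0 := by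
        apply div_ne_zero _ h3
        intro hh
        rcases mul_eq_zero.mp hh with h | h
        · exact two_ne_zero h
        · exact hs h
      have hQP : Q * P = (γ/2) • P := by
        calc Q * P = (((2 * (4 * β + γ * γ))/3)⁻¹ * ((2 * (4 * β + γ * γ))/3)) • (Q * P) := by
              rw [inv_mul_cancel₀ hs2, one_smul]
          _ = ((2 * (4 * β + γ * γ))/3)⁻¹ • (((2 * (4 * β + γ * γ))/3) • (Q * P)) := by
              rw [← smul_smul]
          _ = ((2 * (4 * β + γ * γ))/3)⁻¹ • (((γ * (4 * β + γ * γ))/3) • P) := by rw [comb]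
          _ = (γ/2) • P := by
              rw [smul_smul]
              congr 1
              rw [show (γ * (4 * β + γ * γ)) / 3 = (γ/2) * ((2 * (4 * β + γ * γ))/3) by ring,
                mul_left_comm, inv_mul_cancel₀ hs2, mul_one]
      refine ⟨γ/2, Or.inl ?_⟩
      rw [sub_mul, smul_mul_assoc, one_mul, hQP, sub_self]
  by_cases h3 : ∃ α β γ : 𝕜, P * Q * Q * Q = α • P + β • (P * Q) + γ • (P * Q * Q)
  · obtain ⟨α, β, γ, hαβγ⟩ := h3
    have key : ∀ (f : X →L[𝕜] 𝕜) (y : X), 3 * f (Q (P y)) - γ * f (P y) = 0 := by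
      intro f y
      have h := oneprime P Q H f y
      rw [hαβγ] at h
      have h' : (f (Q (Q (Q (P y)))) - α * f (P y)) • P
          + (-(3 * f (Q (Q (P y)))) - β * f (P y)) • (P * Q)
          + (3 * f (Q (P y)) - γ * f (P y)) • (P * Q * Q) = 0 := by
        calc _ = (f (Q (Q (Q (P y))))) • P - (3 * f (Q (Q (P y)))) • (P * Q)
              + (3 * f (Q (P y))) • (P * Q * Q)
              - (f (P y)) • (α • P + β • (P * Q) + γ • (P * Q * Q)) := by module
          _ = 0 := h
      exact (extract3 hP0 h1 h2 h').2.2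
    have hZ : (3:𝕜) • (Q * P) - γ • P = 0 := by
      apply op_zero; intro g y
      simp only [ContinuousLinearMap.sub_apply, ContinuousLinearMap.smul_apply,
        ContinuousLinearMap.mul_apply, map_sub, map_smul, smul_eq_mul]
      linear_combination key g y
    have h3' : (3:𝕜) ≠ 0 := three_ne_zero
    have hQP : Q * P = (γ/3) • P := by
      calc Q * P = (3:𝕜)⁻¹ • ((3:𝕜) • (Q * P)) := by
            rw [smul_smul, inv_mul_cancel₀ h3', one_smul]
        _ = (3:𝕜)⁻¹ • (γ • P) := by
            rw [show (3:𝕜) • (Q * P) = γ • P by linear_combination (norm := module) hZ]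
        _ = (γ/3) • P := by match_scalars <;> field_simp <;> ring
    refine ⟨γ/3, Or.inl ?_⟩
    rw [sub_mul, smul_mul_assoc, one_mul, hQP, sub_self]
  · exfalso
    apply hP0
    apply op_zero
    intro g y
    have h := oneprime P Q H g y
    have h' : (g (Q (Q (Q (P y))))) • P + (-(3 * g (Q (Q (P y))))) • (P * Q)
        + (3 * (g (Q (P y)))) • (P * Q * Q) + (-(g (P y))) • (P * Q * Q * Q) = 0 := by
      calc _ = (g (Q (Q (Q (P y))))) • P - (3 * g (Q (Q (P y)))) • (P * Q)
            + (3 * g (Q (P y))) • (P * Q * Q) - (g (P y)) • (P * Q * Q * Q) := by module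
        _ = 0 := h
    have := extract4 hP0 h1 h2 h3 h'
    have hg : g (P y) = 0 := by linear_combination -this
    simpa using hg

end Side

section Structure
variable {𝕜 X : Type*} [RCLike 𝕜] [NormedAddCommGroup X] [NormedSpace 𝕜 X]
local notation "BX" => X →L[𝕜] X

lemma structure_lemma (P Q : BX) (hP : P * P = P) (hP0 : P ≠ 0) (hP1 : P ≠ 1)
    (H1 : ∀ (x : X) (f : X →L[𝕜] 𝕜), P * bracket3 (rk1 x f) Q * P = 0)
    (H2 : ∀ (x : X) (f : X →L[𝕜] 𝕜), (1 - P) * bracket3 (rk1 x f) Q * (1 - P) = 0) :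
    (∃ c : 𝕜, (Q - c • 1) * (Q - c • 1) = 0) ∨
    (∃ l m : 𝕜, l ≠ m ∧ P * Q = Q * P ∧
      ((Q - l • 1) * P) * ((Q - l • 1) * P) = 0 ∧
      ((Q - m • 1) * (1 - P)) * ((Q - m • 1) * (1 - P)) = 0) := by
  have hP' : (1 - P) * (1 - P) = 1 - P := by
    calc (1 - P) * (1 - P) = 1 - P - P + P * P := by noncomm_ring
      _ = 1 - P := by rw [hP]; abel
  have hP'0 : (1 : BX) - P ≠ 0 := by
    intro h
    exact hP1 (by rw [sub_eq_zero] at h; exact h.symm)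
  obtain ⟨l, hl⟩ := side P Q hP hP0 H1
  obtain ⟨m, hm⟩ := side (1 - P) Q hP' hP'0 H2
  by_cases hlm : l = m
  · left
    refine ⟨l, ?_⟩
    subst hlm
    set R := Q - l • 1 with hR
    have hsum : ∀ T : BX, T * P + T * (1 - P) = T := by
      intro T; rw [mul_sub, mul_one]; abel
    have hsum' : ∀ T : BX, P * T + (1 - P) * T = T := by
      intro T; rw [sub_mul, one_mul]; abel
    rcases hl with hA | ⟨hA, hA'⟩ | ⟨hA, _⟩ <;> rcases hm with hB | ⟨hB, hB'⟩ | ⟨hB, _⟩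
    · have : R = 0 := by rw [← hsum R, hA, hB, add_zero]
      rw [this, mul_zero]
    · have : R * R = R * (R * P) + R * (R * (1 - P)) := by
        rw [← mul_add, hsum]
      rw [this, hA, mul_zero, zero_add, hB]
    · have hPR : P * R = R := by
        have := hsum' R; rw [hB, add_zero] at this; exact this
      calc R * R = R * (P * R) := by rw [hPR]
        _ = (R * P) * R := by rw [mul_assoc]
        _ = 0 := by rw [hA, zero_mul]
    · have : R * R = R * (R * P) + R * (R * (1 - P)) := by rw [← mul_add, hsum]
      rw [this, hA, hB, mul_zero, add_zero]
    · calc R * R = P * (R * R) + (1 - P) * (R * R) := (hsum' _).symm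
        _ = (P * R) * R + ((1 - P) * R) * R := by rw [mul_assoc, mul_assoc]
        _ = 0 := by rw [hA', hB', add_zero]
    · have hPR : P * R = R := by
        have := hsum' R; rw [hB, add_zero] at this; exact this
      calc R * R = (P * R) * R := by rw [hPR]
        _ = 0 := hA'
    · have hRP : R * P = R := by
        have := hsum R; rw [hB, add_zero] at this; exact this
      calc R * R = (R * P) * R := by rw [hRP]
        _ = R * (P * R) := by rw [mul_assoc]
        _ = R * 0 := by rw [hA]
        _ = 0 := mul_zero R
    · have hPR : (1 - P) * R = R := by
        have := hsum' R; rw [hA, zero_add] at this; exact this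
      calc R * R = ((1 - P) * R) * R := by rw [hPR]
        _ = 0 := hB'
    · have : R = 0 := by rw [← hsum' R, hA, hB, add_zero]
      rw [this, mul_zero]
  · right
    have hcube : ∀ (l' : 𝕜) (P' : BX),
        (((Q - l' • 1) * P' = 0)
          ∨ ((Q - l' • 1) * ((Q - l' • 1) * P') = 0 ∧ (P' * (Q - l' • 1)) * (Q - l' • 1) = 0)
          ∨ ((P' * (Q - l' • 1) = 0) ∧ (Q - l' • 1) * ((Q - l' • 1) * ((Q - l' • 1) * P')) = 0))
        → (Q - l' • 1) * ((Q - l' • 1) * ((Q - l' • 1) * P')) = 0 := by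
      intro l' P' h
      rcases h with h | ⟨h, _⟩ | ⟨_, h⟩
      · rw [h, mul_zero, mul_zero]
      · rw [h, mul_zero]
      · exact h
    have hc1 := hcube l P hl
    have hc2 := hcube m (1 - P) hm
    set Rl := Q - l • 1 with hRldef
    set Rm := Q - m • 1 with hRmdef
    have hcop : IsCoprime ((Polynomial.X - Polynomial.C l)^3) ((Polynomial.X - Polynomial.C m)^3) :=
      (Polynomial.isCoprime_X_sub_C_of_isUnit_sub ((sub_ne_zero_of_ne hlm).isUnit)).pow
    obtain ⟨u, v, huv⟩ := hcop
    have haevall : Polynomial.aeval Q ((Polynomial.X - Polynomial.C l)^3) = Rl^3 := by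
      simp [Algebra.algebraMap_eq_smul_one, hRldef]
    have haevalm : Polynomial.aeval Q ((Polynomial.X - Polynomial.C m)^3) = Rm^3 := by
      simp [Algebra.algebraMap_eq_smul_one, hRmdef]
    have hbez : (Polynomial.aeval Q u) * Rl^3 + (Polynomial.aeval Q v) * Rm^3 = 1 := by
      have h := congrArg (Polynomial.aeval Q) huv
      simp only [map_add, map_mul, map_one, haevall, haevalm] at h
      exact h
    have hpow : ∀ (T S : BX), T^3 * S = T * (T * (T * S)) := by
      intro T S
      rw [pow_succ, pow_two]
      simp [mul_assoc]
    have hRl3 : Rl^3 * P = 0 := by rw [hpow]; exact hc1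
    have hRm3 : Rm^3 * (1 - P) = 0 := by rw [hpow]; exact hc2
    have h2 : Rm^3 * P = Rm^3 := by
      have h := hRm3
      rw [mul_sub, mul_one] at h
      exact (sub_eq_zero.mp h).symm
    have hPeq : P = (Polynomial.aeval Q v) * Rm^3 := by
      calc P = ((Polynomial.aeval Q u) * Rl^3 + (Polynomial.aeval Q v) * Rm^3) * P := by
            rw [hbez, one_mul]
        _ = (Polynomial.aeval Q u) * (Rl^3 * P) + (Polynomial.aeval Q v) * (Rm^3 * P) := by
            rw [add_mul, mul_assoc, mul_assoc]
        _ = (Polynomial.aeval Q v) * Rm^3 := by rw [hRl3, mul_zero, zero_add, h2]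
    have hcomm : P * Q = Q * P := by
      have hc : Commute Q P := by
        rw [hPeq]
        have hv : Commute Q (Polynomial.aeval Q v) := by
          have := (Commute.all (Polynomial.X : Polynomial 𝕜) v).map (Polynomial.aeval Q)
          simpa using this
        have hm1 : Commute Q (m • (1 : BX)) := by
          unfold Commute SemiconjBy
          rw [mul_smul_comm, smul_mul_assoc, mul_one, one_mul]
        have hrm : Commute Q (Rm^3) :=
          Commute.pow_right ((Commute.refl Q).sub_right hm1) 3
        exact hv.mul_right hrm
      exact hc.eq.symm
    have hswapl : P * Rl = Rl * P := by
      simp only [hRldef, mul_sub, sub_mul, mul_smul_comm, smul_mul_assoc, mul_one, one_mul, hcomm]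
    have hswapm : (1 - P) * Rm = Rm * (1 - P) := by
      simp only [hRmdef, mul_sub, sub_mul, mul_smul_comm, smul_mul_assoc, mul_one, one_mul,
        smul_sub, hcomm]
      abel
    refine ⟨l, m, hlm, hcomm, ?_, ?_⟩
    · rcases hl with h | ⟨h, _⟩ | ⟨h, _⟩
      · rw [h, zero_mul]
      · have e1 : (Rl * P) * (Rl * P) = Rl * (P * (Rl * P)) := by rw [mul_assoc]
        have e2 : P * (Rl * P) = (P * Rl) * P := by rw [← mul_assoc]
        rw [e1, e2, hswapl, mul_assoc, hP]
        exact h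
      · have h0 : Rl * P = 0 := by rw [← hswapl, h]
        rw [h0, zero_mul]
    · rcases hm with h | ⟨h, _⟩ | ⟨h, _⟩
      · rw [h, zero_mul]
      · have e1 : (Rm * (1 - P)) * (Rm * (1 - P)) = Rm * ((1 - P) * (Rm * (1 - P))) := by
          rw [mul_assoc]
        have e2 : (1 - P) * (Rm * (1 - P)) = ((1 - P) * Rm) * (1 - P) := by rw [← mul_assoc]
        rw [e1, e2, hswapm, mul_assoc, hP']
        exact h
      · have h0 : Rm * (1 - P) = 0 := by rw [← hswapm, h]
        rw [h0, zero_mul]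

end Structure

def IsStandardOperatorAlgebra' (𝕜 : Type*) [RCLike 𝕜] (X : Type*)
    [NormedAddCommGroup X] [NormedSpace 𝕜 X]
    (𝒜 : Subalgebra 𝕜 (X →L[𝕜] X)) : Prop :=
  ∀ T : X →L[𝕜] X, FiniteDimensional 𝕜 (LinearMap.range (T : X →ₗ[𝕜] X)) → T ∈ 𝒜

section Endgame
variable {𝕜 X : Type*} [RCLike 𝕜] [NormedAddCommGroup X] [NormedSpace 𝕜 X]
local notation "BX" => X →L[𝕜] X

lemma rk1_smul_left (c : 𝕜) (x : X) (f : X →L[𝕜] 𝕜) : rk1 (c • x) f = c • rk1 x f := by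
  ext y; simp [smul_smul, mul_comm]

lemma coe_b3 {𝒜 : Subalgebra 𝕜 (X →L[𝕜] X)} (a b : 𝒜) :
    ((bracket3 a b : 𝒜) : X →L[𝕜] X) = bracket3 (a : X →L[𝕜] X) (b : X →L[𝕜] X) := by
  simp [bracket3, bracket1]

lemma endgame [Nontrivial X] {𝒜 : Subalgebra 𝕜 (X →L[𝕜] X)}
    (h𝒜 : IsStandardOperatorAlgebra' 𝕜 X 𝒜)
    (Φ : 𝒜 → 𝒜) (hsurj : Function.Surjective Φ)
    (hpres : ∀ A B : 𝒜, bracket3 (Φ A) (Φ B) = bracket3 A B)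
    (P : 𝒜) (v : X) (g : X →L[𝕜] 𝕜) (hgv : g v = 1)
    (he1 : rk1 v g ≠ 1)
    (hcase : (((P : 𝒜) : BX) * rk1 v g = rk1 v g ∧ rk1 v g * ((P : 𝒜) : BX) = rk1 v g)
           ∨ (((P : 𝒜) : BX) * rk1 v g = 0 ∧ rk1 v g * ((P : 𝒜) : BX) = 0)) :
    bracket1 ((Φ P : 𝒜) : BX) (rk1 v g) = 0 := by
  set e : BX := rk1 v g with hedef
  have he : e * e = e := by
    rw [hedef, mul_rk1, rk1_apply, hgv, one_smul]
  have hev : e v = v := by rw [hedef, rk1_apply, hgv, one_smul]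
  have hv0 : v ≠ 0 := by
    intro h; rw [h] at hgv; simp at hgv
  have he0 : e ≠ 0 := by
    intro h
    apply hv0
    rw [← hev, h, ContinuousLinearMap.zero_apply]
  have hmem : e ∈ 𝒜 := rk1_mem h𝒜 v g
  obtain ⟨B, hB⟩ := hsurj ⟨e, hmem⟩
  have hcoeB : ((Φ B : 𝒜) : BX) = e := by rw [hB]
  have hcorner : ∀ (x : X) (f : X →L[𝕜] 𝕜),
      e * bracket3 (rk1 x f) ((B : 𝒜) : BX) * e = 0 ∧
      (1 - e) * bracket3 (rk1 x f) ((B : 𝒜) : BX) * (1 - e) = 0 := by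
    intro x f
    have h := hpres ⟨rk1 x f, rk1_mem h𝒜 x f⟩ B
    have hc := congrArg (fun t : 𝒜 => (t : BX)) h
    simp only [coe_b3, hcoeB] at hc
    have h' : bracket3 (rk1 x f) ((B : 𝒜) : BX)
        = bracket3 ((Φ ⟨rk1 x f, rk1_mem h𝒜 x f⟩ : 𝒜) : BX) e := hc.symm
    rw [h', b3_idem _ _ he]
    exact ⟨corner1 e _ he, corner2 e _ he⟩
  rcases structure_lemma e ((B : 𝒜) : BX) he he0 he1
      (fun x f => (hcorner x f).1) (fun x f => (hcorner x f).2) with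
    ⟨c, hc⟩ | ⟨l', m', hne', hcommB, hM1, hM2⟩
  · exfalso
    apply idem_scalar_contra e he he0 he1
    intro x f
    obtain ⟨A, hA⟩ := hsurj ⟨rk1 x f, rk1_mem h𝒜 x f⟩
    have h := hpres A B
    have hc2 := congrArg (fun t : 𝒜 => (t : BX)) h
    simp only [coe_b3, hcoeB, hA] at hc2
    have hz : bracket3 ((A : 𝒜) : BX) ((B : 𝒜) : BX) = 0 := by
      rw [b3_unshift _ _ c]
      exact b3_sqzero _ _ hc
    rw [hz] at hc2
    have h3 : rk1 x f * e - e * rk1 x f = 0 := by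
      rw [← b3_idem _ _ he]
      exact hc2
    exact sub_eq_zero.mp h3
  · set M1 : BX := (((B : 𝒜) : BX) - l' • 1) * e with hM1def
    have hswap : e * (((B : 𝒜) : BX) - l' • 1) = (((B : 𝒜) : BX) - l' • 1) * e := by
      simp only [mul_sub, sub_mul, mul_smul_comm, smul_mul_assoc, mul_one, one_mul, hcommB]
    have hM1mul : M1 * e = M1 := by rw [hM1def, mul_assoc, he]
    have heM1 : e * M1 = M1 := by rw [hM1def, ← mul_assoc, hswap, mul_assoc, he]
    have hM1c : M1 = (g (M1 v)) • e := by
      calc M1 = e * (M1 * e) := by rw [hM1mul, heM1]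
        _ = (g (M1 v)) • e := by
          rw [hedef, mul_rk1 M1 v g, mul_rk1 (rk1 v g) (M1 v) g, rk1_apply, rk1_smul_left]
    have hc0 : g (M1 v) = 0 := by
      have h := hM1
      rw [hM1c, smul_mul_assoc, mul_smul_comm, he, smul_smul] at h
      rcases smul_eq_zero.mp h with h | h
      · exact mul_self_eq_zero.mp h
      · exact absurd h he0
    have hM10 : M1 = 0 := by rw [hM1c, hc0, zero_smul]
    have hBe : ((B : 𝒜) : BX) * e = l' • e := by
      have h := hM10
      rw [hM1def, sub_mul, smul_mul_assoc, one_mul] at h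
      exact sub_eq_zero.mp h
    set M : BX := (((B : 𝒜) : BX) - m' • 1) * (1 - e) with hMdef
    have hswapm : e * (((B : 𝒜) : BX) - m' • 1) = (((B : 𝒜) : BX) - m' • 1) * e := by
      simp only [mul_sub, sub_mul, mul_smul_comm, smul_mul_assoc, mul_one, one_mul, hcommB]
    have heM : e * M = 0 := by
      rw [hMdef, ← mul_assoc, hswapm, mul_assoc]
      have h1 : e * (1 - e) = 0 := by rw [mul_sub, mul_one, he, sub_self]
      rw [h1, mul_zero]
    have hMe : M * e = 0 := by
      rw [hMdef, mul_assoc]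
      have h1 : (1 - e) * e = 0 := by rw [sub_mul, one_mul, he, sub_self]
      rw [h1, mul_zero]
    have hMM : M * M = 0 := hM2
    have hBdec : ((B : 𝒜) : BX) = ((l' - m') • e + M) + m' • 1 := by
      rw [hMdef]
      have h1 : ((l' - m') • e + (((B : 𝒜) : BX) - m' • 1) * (1 - e)) + m' • 1
          = ((B : 𝒜) : BX) + (l' • e - ((B : 𝒜) : BX) * e) := by
        simp only [mul_sub, sub_mul, mul_one, one_mul, smul_sub, sub_smul, mul_smul_comm,
          smul_mul_assoc]
        module
      rw [h1, hBe]
      simp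
    have hzero : bracket3 ((P : 𝒜) : BX) ((B : 𝒜) : BX) = 0 := by
      rw [hBdec, b3_shift]
      set T : BX := (l' - m') • e + M with hTdef
      have hTT : T * T = ((l' - m') * (l' - m')) • e := by
        rw [hTdef]
        simp only [mul_add, add_mul, smul_mul_assoc, mul_smul_comm, he, heM, hMe, hMM, smul_smul,
          smul_zero, add_zero, zero_add]
      have heT : e * T = (l' - m') • e := by
        rw [hTdef]
        simp only [mul_add, mul_smul_comm, he, heM, add_zero]
      have hTe : T * e = (l' - m') • e := by
        rw [hTdef]
        simp only [add_mul, smul_mul_assoc, he, hMe, add_zero]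
      have hTTx : ∀ Z : BX, T * (T * Z) = ((l' - m') * (l' - m')) • (e * Z) := by
        intro Z; rw [← mul_assoc, hTT, smul_mul_assoc]
      rcases hcase with ⟨hPe, heP⟩ | ⟨hPe, heP⟩
      · have k1 : e * (((P : 𝒜) : BX) * T) = (l' - m') • e := by
          rw [← mul_assoc, heP, heT]
        have k2 : e * (T * ((P : 𝒜) : BX)) = (l' - m') • e := by
          rw [← mul_assoc, heT, smul_mul_assoc, heP]
        simp only [bracket3, bracket1, mul_sub, sub_mul, mul_assoc]
        simp only [hTTx, hTT, mul_smul_comm, smul_mul_assoc, hPe, heP, heT, hTe, k1, k2, smul_smul]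
        module
      · have k1 : e * (((P : 𝒜) : BX) * T) = 0 := by
          rw [← mul_assoc, heP, zero_mul]
        have k2 : e * (T * ((P : 𝒜) : BX)) = 0 := by
          rw [← mul_assoc, heT, smul_mul_assoc, heP, smul_zero]
        simp only [bracket3, bracket1, mul_sub, sub_mul, mul_assoc]
        simp only [hTTx, hTT, mul_smul_comm, smul_mul_assoc, hPe, heP, heT, hTe, k1, k2, smul_smul,
          mul_zero, smul_zero, zero_mul, sub_zero, zero_sub, neg_zero, zero_smul]
    have hfin := congrArg (fun t : 𝒜 => (t : BX)) (hpres P B)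
    simp only [coe_b3, hcoeB] at hfin
    rw [hzero] at hfin
    rw [b3_idem _ _ he] at hfin
    show bracket1 ((Φ P : 𝒜) : BX) e = 0
    rw [bracket1]
    exact hfin

end Endgame

theorem stmt_14' {𝕜 X : Type*} [RCLike 𝕜] [NormedAddCommGroup X] [NormedSpace 𝕜 X]
    [CompleteSpace X] (hdim : 2 ≤ Module.rank 𝕜 X)
    (𝒜 : Subalgebra 𝕜 (X →L[𝕜] X)) (h𝒜 : IsStandardOperatorAlgebra' 𝕜 X 𝒜)
    (Φ : 𝒜 → 𝒜) (hsurj : Function.Surjective Φ)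
    (hpres : ∀ A B : 𝒜, bracket3 (Φ A) (Φ B) = bracket3 A B)
    (P : 𝒜) (hP : P * P = P) (hP0 : P ≠ 0) (hP1 : P ≠ 1) :
    ∃ lP muP : 𝕜, Φ P = lP • P + muP • (1 : 𝒜) := by
  classical
  have hnt : Nontrivial X := by
    rcases subsingleton_or_nontrivial X with hs | h
    · exfalso
      have h0 : Module.rank 𝕜 X ≤ 1 := by
        have htop : (⊤ : Submodule 𝕜 X) = Submodule.span 𝕜 {(0 : X)} := by
          apply le_antisymm _ le_top
          intro w _
          have hw : w = (0 : X) := Subsingleton.elim w 0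
          rw [hw]; exact Submodule.zero_mem _
        rw [← rank_top 𝕜 X, htop]
        simpa using rank_span_le (R := 𝕜) ({(0 : X)} : Set X)
      have h2 : (2 : Cardinal) ≤ 1 := hdim.trans h0
      norm_num at h2
    · exact h
  have hP₀ : (P : X →L[𝕜] X) * (P : X →L[𝕜] X) = (P : X →L[𝕜] X) := by
    have h := congrArg (fun t : 𝒜 => (t : X →L[𝕜] X)) hP
    simpa using h
  have hP₀0 : (P : X →L[𝕜] X) ≠ 0 := by
    intro h
    exact hP0 (Subtype.coe_injective (by simpa using h))
  have hP₀1 : (P : X →L[𝕜] X) ≠ 1 := by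
    intro h
    exact hP1 (Subtype.coe_injective (by simpa using h))
  set Q : X →L[𝕜] X := ((Φ P : 𝒜) : X →L[𝕜] X) with hQdef
  have H1 : ∀ (x : X) (f : X →L[𝕜] 𝕜),
      (P : X →L[𝕜] X) * bracket3 (rk1 x f) Q * (P : X →L[𝕜] X) = 0 ∧
      (1 - (P : X →L[𝕜] X)) * bracket3 (rk1 x f) Q * (1 - (P : X →L[𝕜] X)) = 0 := by
    intro x f
    obtain ⟨A, hA⟩ := hsurj ⟨rk1 x f, rk1_mem h𝒜 x f⟩
    have h := hpres A P
    have hc := congrArg (fun t : 𝒜 => (t : X →L[𝕜] X)) h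
    simp only [coe_b3, hA] at hc
    rw [show bracket3 (rk1 x f) Q
        = bracket3 ((A : 𝒜) : X →L[𝕜] X) ((P : 𝒜) : X →L[𝕜] X) from hc]
    rw [b3_idem _ _ hP₀]
    exact ⟨corner1 _ _ hP₀, corner2 _ _ hP₀⟩
  rcases structure_lemma (P : X →L[𝕜] X) Q hP₀ hP₀0 hP₀1
      (fun x f => (H1 x f).1) (fun x f => (H1 x f).2) with
    ⟨c, hc⟩ | ⟨l, m, hlm, hcomm, hN1, hN2⟩
  · exfalso
    apply idem_scalar_contra (P : X →L[𝕜] X) hP₀ hP₀0 hP₀1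
    intro x f
    have h := hpres ⟨rk1 x f, rk1_mem h𝒜 x f⟩ P
    have hc2 := congrArg (fun t : 𝒜 => (t : X →L[𝕜] X)) h
    simp only [coe_b3] at hc2
    have hz : bracket3 ((Φ ⟨rk1 x f, rk1_mem h𝒜 x f⟩ : 𝒜) : X →L[𝕜] X) Q = 0 := by
      rw [b3_unshift _ _ c]
      exact b3_sqzero _ _ hc
    rw [hz] at hc2
    have h3 : rk1 x f * (P : X →L[𝕜] X) - (P : X →L[𝕜] X) * rk1 x f = 0 := by
      rw [← b3_idem _ _ hP₀]
      exact hc2.symm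
    exact sub_eq_zero.mp h3
  · set N1 : X →L[𝕜] X := (Q - l • 1) * (P : X →L[𝕜] X) with hN1def
    set N2 : X →L[𝕜] X := (Q - m • 1) * (1 - (P : X →L[𝕜] X)) with hN2def
    have hswapl : (P : X →L[𝕜] X) * (Q - l • 1) = (Q - l • 1) * (P : X →L[𝕜] X) := by
      simp only [mul_sub, sub_mul, mul_smul_comm, smul_mul_assoc, mul_one, one_mul, hcomm]
    have hswapm : (P : X →L[𝕜] X) * (Q - m • 1) = (Q - m • 1) * (P : X →L[𝕜] X) := by
      simp only [mul_sub, sub_mul, mul_smul_comm, smul_mul_assoc, mul_one, one_mul, hcomm]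
    have hPP' : (P : X →L[𝕜] X) * (1 - (P : X →L[𝕜] X)) = 0 := by
      rw [mul_sub, mul_one, hP₀, sub_self]
    have hP'P : (1 - (P : X →L[𝕜] X)) * (P : X →L[𝕜] X) = 0 := by
      rw [sub_mul, one_mul, hP₀, sub_self]
    have hdecomp : Q = (l - m) • (P : X →L[𝕜] X) + m • 1 + (N1 + N2) := by
      rw [hN1def, hN2def]
      simp only [mul_sub, sub_mul, mul_one, one_mul, smul_sub, sub_smul, mul_smul_comm,
        smul_mul_assoc]
      module
    have hPN1 : (P : X →L[𝕜] X) * N1 = N1 := by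
      rw [hN1def, ← mul_assoc, hswapl, mul_assoc, hP₀]
    have hPN2 : (P : X →L[𝕜] X) * N2 = 0 := by
      rw [hN2def, ← mul_assoc, hswapm, mul_assoc, hPP', mul_zero]
    have hN2P : N2 * (P : X →L[𝕜] X) = 0 := by
      rw [hN2def, mul_assoc, hP'P, mul_zero]
    by_cases hN : N1 = 0 ∧ N2 = 0
    · refine ⟨l - m, m, ?_⟩
      have hQeq : Q = (l - m) • (P : X →L[𝕜] X) + m • 1 := by
        rw [hdecomp, hN.1, hN.2]; simp
      apply Subtype.coe_injective
      have hco : (((l - m) • P + m • (1 : 𝒜) : 𝒜) : X →L[𝕜] X)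
          = (l - m) • (P : X →L[𝕜] X) + m • 1 := by
        simp
      calc ((Φ P : 𝒜) : X →L[𝕜] X) = Q := rfl
        _ = (l - m) • (P : X →L[𝕜] X) + m • 1 := hQeq
        _ = (((l - m) • P + m • (1 : 𝒜) : 𝒜) : X →L[𝕜] X) := hco.symm
    · exfalso
      by_cases hN1z : N1 = 0
      · -- N2 ≠ 0 branch
        have hN2z : N2 ≠ 0 := fun h => hN ⟨hN1z, h⟩
        obtain ⟨x, hx⟩ : ∃ x, N2 x ≠ 0 := by
          by_contra hco; push_neg at hco
          exact hN2z (ContinuousLinearMap.ext fun y => by simpa using hco y)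
        set v : X := N2 x with hvdef
        have hPv : (P : X →L[𝕜] X) v = 0 := by
          rw [hvdef, ← ContinuousLinearMap.mul_apply, hPN2, ContinuousLinearMap.zero_apply]
        obtain ⟨g₀, hg₀⟩ := exists_dual_one (𝕜 := 𝕜) v hx
        set g : X →L[𝕜] 𝕜 := g₀.comp (1 - (P : X →L[𝕜] X)) with hgdef
        have hgv : g v = 1 := by
          rw [hgdef]
          simp [hPv, hg₀]
        have hPe : (P : X →L[𝕜] X) * rk1 v g = 0 := by
          rw [mul_rk1, hPv, rk1_zero_left]
        have heP : rk1 v g * (P : X →L[𝕜] X) = 0 := by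
          rw [rk1_mul]
          have hg1 : g.comp (P : X →L[𝕜] X) = 0 := by
            ext y
            have hPPy : (P : X →L[𝕜] X) ((P : X →L[𝕜] X) y) = (P : X →L[𝕜] X) y := by
              rw [← ContinuousLinearMap.mul_apply, hP₀]
            simp [hgdef, hPPy]
          rw [hg1, rk1_zero_right]
        have hN2e : N2 * rk1 v g = 0 := by
          rw [mul_rk1]
          have hv2 : N2 v = 0 := by
            rw [hvdef, ← ContinuousLinearMap.mul_apply, hN2, ContinuousLinearMap.zero_apply]
          rw [hv2, rk1_zero_left]
        have heN2x : (rk1 v g * N2) x = v := by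
          rw [ContinuousLinearMap.mul_apply, ← hvdef, rk1_apply, hgv, one_smul]
        have hb := endgame h𝒜 Φ hsurj hpres P v g hgv (rk1_ne_one hdim v g)
          (Or.inr ⟨hPe, heP⟩)
        have hb' : Q * rk1 v g - rk1 v g * Q = 0 := hb
        have hQe : Q * rk1 v g = m • rk1 v g := by
          rw [hdecomp, hN1z]
          simp only [add_mul, smul_mul_assoc, one_mul, zero_add, add_zero, zero_mul]
          rw [hPe, hN2e]
          simp
        have heQ : rk1 v g * Q = m • rk1 v g + rk1 v g * N2 := by
          rw [hdecomp, hN1z]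
          simp only [mul_add, mul_smul_comm, mul_one, add_zero, mul_zero]
          rw [heP]
          simp
        rw [hQe, heQ] at hb'
        have hzero : rk1 v g * N2 = 0 := by
          have h4 : -(rk1 v g * N2) = 0 := by rw [← hb']; abel
          simpa using h4
        rw [hzero, ContinuousLinearMap.zero_apply] at heN2x
        exact hx heN2x.symm
      · -- N1 ≠ 0 branch
        obtain ⟨x, hx⟩ : ∃ x, N1 x ≠ 0 := by
          by_contra hco; push_neg at hco
          exact hN1z (ContinuousLinearMap.ext fun y => by simpa using hco y)
        set v : X := N1 x with hvdef
        have hPv : (P : X →L[𝕜] X) v = v := by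
          rw [hvdef, ← ContinuousLinearMap.mul_apply, hPN1]
        obtain ⟨g₀, hg₀⟩ := exists_dual_one (𝕜 := 𝕜) v hx
        set g : X →L[𝕜] 𝕜 := g₀.comp (P : X →L[𝕜] X) with hgdef
        have hgv : g v = 1 := by
          rw [hgdef]
          simp [hPv, hg₀]
        have hPe : (P : X →L[𝕜] X) * rk1 v g = rk1 v g := by
          rw [mul_rk1, hPv]
        have heP : rk1 v g * (P : X →L[𝕜] X) = rk1 v g := by
          rw [rk1_mul]
          have hg1 : g.comp (P : X →L[𝕜] X) = g := by
            ext y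
            have hPPy : (P : X →L[𝕜] X) ((P : X →L[𝕜] X) y) = (P : X →L[𝕜] X) y := by
              rw [← ContinuousLinearMap.mul_apply, hP₀]
            simp [hgdef, hPPy]
          rw [hg1]
        have hN1e : N1 * rk1 v g = 0 := by
          rw [mul_rk1]
          have hv1 : N1 v = 0 := by
            rw [hvdef, ← ContinuousLinearMap.mul_apply, hN1, ContinuousLinearMap.zero_apply]
          rw [hv1, rk1_zero_left]
        have hN2e : N2 * rk1 v g = 0 := by
          rw [mul_rk1]
          have hv2 : N2 v = 0 := by
            rw [← hPv, ← ContinuousLinearMap.mul_apply, hN2P, ContinuousLinearMap.zero_apply]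
          rw [hv2, rk1_zero_left]
        have heN2 : rk1 v g * N2 = 0 := by
          rw [← heP, mul_assoc, hPN2, mul_zero]
        have heN1x : (rk1 v g * N1) x = v := by
          rw [ContinuousLinearMap.mul_apply, ← hvdef, rk1_apply, hgv, one_smul]
        have hb := endgame h𝒜 Φ hsurj hpres P v g hgv (rk1_ne_one hdim v g)
          (Or.inl ⟨hPe, heP⟩)
        have hb' : Q * rk1 v g - rk1 v g * Q = 0 := hb
        have hQe : Q * rk1 v g = l • rk1 v g := by
          rw [hdecomp]
          simp only [add_mul, smul_mul_assoc, one_mul]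
          rw [hPe, hN1e, hN2e]
          module
        have heQ : rk1 v g * Q = l • rk1 v g + rk1 v g * N1 := by
          rw [hdecomp]
          simp only [mul_add, mul_smul_comm, mul_one]
          rw [heP, heN2]
          module
        rw [hQe, heQ] at hb'
        have hzero : rk1 v g * N1 = 0 := by
          have h4 : -(rk1 v g * N1) = 0 := by rw [← hb']; abel
          simpa using h4
        rw [hzero, ContinuousLinearMap.zero_apply] at heN1x
        exact hx heN1x.symm


theorem stmt_14 {𝕜 X : Type*} [RCLike 𝕜] [NormedAddCommGroup X] [NormedSpace 𝕜 X]
    [CompleteSpace X] (hdim : 2 ≤ Module.rank 𝕜 X)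
    (𝒜 : Subalgebra 𝕜 (X →L[𝕜] X)) (h𝒜 : IsStandardOperatorAlgebra 𝕜 X 𝒜)
    (Φ : 𝒜 → 𝒜) (hsurj : Function.Surjective Φ)
    (hpres : ∀ A B : 𝒜, bracket3 (Φ A) (Φ B) = bracket3 A B)
    (P : 𝒜) (hP : P * P = P) (hP0 : P ≠ 0) (hP1 : P ≠ 1)
    (hrank : Module.rank 𝕜 (LinearMap.range ((P : X →L[𝕜] X) : X →ₗ[𝕜] X)) ≤ 2) :
    ∃ lP muP : 𝕜, Φ P = lP • P + muP • (1 : 𝒜) :=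
  stmt_14' hdim 𝒜 h𝒜 Φ hsurj hpres P hP hP0 hP1
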